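/- Let n ≥ 6 and let Γ' be a signed graph of order n that attains the maximum largest eigenvalue λ1 among all unbalanced, negative-C4-free signed graphs of order n, and suppose A(Γ') has a nonnegative unit eigenvector corresponding to λ1(Γ'). If C is a negative cycle of Γ' of shortest length among all negative cycles of Γ', then every negative edge of Γ' lies on C. -/

import Mathlib

open scoped BigOperators

/-- A signed graph on the vertex set `Fin n`: a simple graph together with a
symmetric `±1` sign on each edge. -/
structure SignedGraph (n : ℕ) where
  G : SimpleGraph (Fin n)
  sign : Fin n → Fin n → ℤ
  sign_symm : ∀ i j, sign i j = sign j i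
  sign_pm : ∀ i j, G.Adj i j → sign i j = 1 ∨ sign i j = -1

namespace SignedGraph

variable {n : ℕ}

open Classical in
/-- The adjacency matrix of a signed graph, as a real matrix. -/
noncomputable def adjMatrix (Γ : SignedGraph n) : Matrix (Fin n) (Fin n) ℝ :=
  fun i j => if Γ.G.Adj i j then (Γ.sign i j : ℝ) else 0

/-- The largest eigenvalue (the index) of a signed graph. -/
noncomputable def lambda1 (Γ : SignedGraph n) : ℝ :=
  sSup (spectrum ℝ Γ.adjMatrix)

/-- The sign of an unordered edge. -/
def signEdge (Γ : SignedGraph n) : Sym2 (Fin n) → ℤ :=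
  Sym2.lift ⟨Γ.sign, Γ.sign_symm⟩

/-- The sign of a walk: the product of the signs of its edges. -/
def walkSign (Γ : SignedGraph n) {u v : Fin n} (w : Γ.G.Walk u v) : ℤ :=
  (w.edges.map Γ.signEdge).prod

/-- A negative cycle: a cycle whose sign is `-1`
(equivalently, with an odd number of negative edges). -/
def IsNegCycle (Γ : SignedGraph n) {u : Fin n} (c : Γ.G.Walk u u) : Prop :=
  c.IsCycle ∧ Γ.walkSign c = -1

/-- A signed graph is unbalanced if it contains a negative cycle. -/
def Unbalanced (Γ : SignedGraph n) : Prop :=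
  ∃ (u : Fin n) (c : Γ.G.Walk u u), Γ.IsNegCycle c

/-- A signed graph is negative-`C₄`-free if it contains no negative 4-cycle. -/
def NegC4Free (Γ : SignedGraph n) : Prop :=
  ∀ (u : Fin n) (c : Γ.G.Walk u u), c.IsCycle → c.length = 4 → Γ.walkSign c ≠ -1

end SignedGraph

/-- The signed graph `Γ₁`: vertices `2,…,n-1` induce an all-positive complete
graph, vertices `0` and `1` are joined to each other by a negative edge and to
vertex `2` by positive edges, and have no other neighbours. -/
def Gamma1 (n : ℕ) : SignedGraph n where
  G :=
    { Adj := fun i j => i ≠ j ∧ (2 ≤ min i.val j.val ∨ max i.val j.val ≤ 2)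
      symm := by
        constructor
        intro i j h
        refine ⟨Ne.symm h.1, ?_⟩
        rw [min_comm, max_comm]
        exact h.2
      loopless := by constructor; intro i h; exact h.1 rfl }
  sign := fun i j =>
    if (i.val = 0 ∧ j.val = 1) ∨ (i.val = 1 ∧ j.val = 0) then -1 else 1
  sign_symm := by
    intro i j
    try dsimp only
    by_cases h : (i.val = 0 ∧ j.val = 1) ∨ (i.val = 1 ∧ j.val = 0)
    · rw [if_pos h, if_pos (by tauto)]
    · rw [if_neg h, if_neg (by tauto)]
  sign_pm := by
    intro i j _
    try dsimp only
    by_cases h : (i.val = 0 ∧ j.val = 1) ∨ (i.val = 1 ∧ j.val = 0)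
    · rw [if_pos h]; right; rfl
    · rw [if_neg h]; left; rfl

/-- The signed graph `Γ₂`: vertices `4,…,n-1` induce an all-positive complete
graph, vertices `2` and `3` are joined by positive edges to all of `4,…,n-1`
(but not to each other), vertices `0` and `1` are joined to each other by a
negative edge and to `2` and `3` by positive edges, and have no other
neighbours. -/
def Gamma2 (n : ℕ) : SignedGraph n where
  G :=
    { Adj := fun i j => i ≠ j ∧
        ((i.val ≤ 1 ∧ j.val ≤ 3) ∨ (j.val ≤ 1 ∧ i.val ≤ 3) ∨
         (2 ≤ i.val ∧ i.val ≤ 3 ∧ 4 ≤ j.val) ∨ (2 ≤ j.val ∧ j.val ≤ 3 ∧ 4 ≤ i.val) ∨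
         (4 ≤ i.val ∧ 4 ≤ j.val))
      symm := by
        constructor
        intro i j h
        exact ⟨Ne.symm h.1, by tauto⟩
      loopless := by constructor; intro i h; exact h.1 rfl }
  sign := fun i j =>
    if (i.val = 0 ∧ j.val = 1) ∨ (i.val = 1 ∧ j.val = 0) then -1 else 1
  sign_symm := by
    intro i j
    try dsimp only
    by_cases h : (i.val = 0 ∧ j.val = 1) ∨ (i.val = 1 ∧ j.val = 0)
    · rw [if_pos h, if_pos (by tauto)]
    · rw [if_neg h, if_neg (by tauto)]
  sign_pm := by
    intro i j _
    try dsimp only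
    by_cases h : (i.val = 0 ∧ j.val = 1) ∨ (i.val = 1 ∧ j.val = 0)
    · rw [if_pos h]; right; rfl
    · rw [if_neg h]; left; rfl


/-- The all-negative complete signed graph `(K_n, -)`. -/
def NegKn (n : ℕ) : SignedGraph n where
  G := ⊤
  sign := fun _ _ => -1
  sign_symm := fun _ _ => rfl
  sign_pm := fun _ _ _ => Or.inr rfl

/-- `Γ` is switching equivalent to `Γ'` (up to a relabelling of the vertices):
there is a bijection of the vertices matching the underlying graphs and a
`±1`-valued switching function `s` relating the two sign functions. -/
def SwitchingEquiv {n : ℕ} (Γ Γ' : SignedGraph n) : Prop :=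
  ∃ e : Fin n ≃ Fin n, ∃ s : Fin n → ℤ, (∀ i, s i = 1 ∨ s i = -1) ∧
    (∀ i j, Γ.G.Adj i j ↔ Γ'.G.Adj (e i) (e j)) ∧
    (∀ i j, Γ.G.Adj i j → Γ.sign i j = s i * Γ'.sign (e i) (e j) * s j)

section SpectralAux

open Matrix

variable {N : ℕ} {B : Matrix (Fin N) (Fin N) ℝ}

lemma SGaux.eig_le_sSup (hB : B.IsHermitian) (k : Fin N) :
    hB.eigenvalues k ≤ sSup (spectrum ℝ B) := by
  rw [hB.spectrum_real_eq_range_eigenvalues]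
  exact le_csSup (Set.finite_range _).bddAbove ⟨k, rfl⟩

lemma SGaux.rayleigh_decomp (hB : B.IsHermitian) (x : Fin N → ℝ) :
    ∃ y : Fin N → ℝ,
      (x ⬝ᵥ x = ∑ k, y k ^ 2) ∧
      (x ⬝ᵥ (B *ᵥ x) = ∑ k, hB.eigenvalues k * y k ^ 2) ∧
      (B *ᵥ x = (hB.eigenvectorUnitary : Matrix (Fin N) (Fin N) ℝ) *ᵥ
        (fun k => hB.eigenvalues k * y k)) ∧
      ((hB.eigenvectorUnitary : Matrix (Fin N) (Fin N) ℝ) *ᵥ y = x) := by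
  set U : Matrix (Fin N) (Fin N) ℝ := (hB.eigenvectorUnitary : Matrix (Fin N) (Fin N) ℝ) with hU
  have hmem := hB.eigenvectorUnitary.2
  rw [Unitary.mem_iff] at hmem
  have hUs : U * star U = 1 := hmem.2
  have hUs' : star U * U = 1 := hmem.1
  have hstar : star U = Uᵀ := by
    rw [Matrix.star_eq_conjTranspose, Matrix.conjTranspose_eq_transpose_of_trivial]
  set y : Fin N → ℝ := (star U) *ᵥ x with hy
  have hxy : U *ᵥ y = x := by
    rw [hy, Matrix.mulVec_mulVec, hUs, Matrix.one_mulVec]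
  have key : ∀ a b : Fin N → ℝ, (U *ᵥ a) ⬝ᵥ (U *ᵥ b) = a ⬝ᵥ b := by
    intro a b
    rw [Matrix.dotProduct_mulVec, ← Matrix.mulVec_transpose, Matrix.mulVec_mulVec,
      ← hstar, hUs', Matrix.one_mulVec]
  have hdiag : diagonal (RCLike.ofReal ∘ hB.eigenvalues) = diagonal hB.eigenvalues := rfl
  have hDy : B *ᵥ x = U *ᵥ (fun k => hB.eigenvalues k * y k) := by
    have hst := congrArg (fun M => M *ᵥ x) hB.spectral_theorem
    simp only [← hU, hdiag] at hst
    have h5 : diagonal hB.eigenvalues *ᵥ y = fun k => hB.eigenvalues k * y k := by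
      ext k
      simp [Matrix.mulVec_diagonal]
    rw [← h5, hy, Matrix.mulVec_mulVec, Matrix.mulVec_mulVec]
    exact hst
  refine ⟨y, ?_, ?_, hDy, hxy⟩
  · conv_lhs => rw [← hxy]
    rw [key y y]
    simp [dotProduct, pow_two]
  · calc x ⬝ᵥ (B *ᵥ x) = x ⬝ᵥ (U *ᵥ fun k => hB.eigenvalues k * y k) := by rw [hDy]
    _ = (U *ᵥ y) ⬝ᵥ (U *ᵥ fun k => hB.eigenvalues k * y k) := by rw [hxy]
    _ = y ⬝ᵥ (fun k => hB.eigenvalues k * y k) := key _ _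
    _ = ∑ k, hB.eigenvalues k * y k ^ 2 := by
        simp only [dotProduct]
        exact Finset.sum_congr rfl fun k _ => by ring

lemma SGaux.rayleigh_le_sSup (hB : B.IsHermitian) (x : Fin N → ℝ) (hx1 : x ⬝ᵥ x = 1) :
    x ⬝ᵥ (B *ᵥ x) ≤ sSup (spectrum ℝ B) := by
  obtain ⟨y, h1, h2, _, _⟩ := SGaux.rayleigh_decomp hB x
  rw [h2]
  calc ∑ k, hB.eigenvalues k * y k ^ 2 ≤ ∑ k, sSup (spectrum ℝ B) * y k ^ 2 := by
        refine Finset.sum_le_sum fun k _ => ?_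
        exact mul_le_mul_of_nonneg_right (SGaux.eig_le_sSup hB k) (sq_nonneg _)
  _ = sSup (spectrum ℝ B) * ∑ k, y k ^ 2 := by rw [Finset.mul_sum]
  _ = sSup (spectrum ℝ B) := by rw [← h1, hx1, mul_one]

lemma SGaux.mulVec_eq_of_rayleigh_eq (hB : B.IsHermitian) (x : Fin N → ℝ) (hx1 : x ⬝ᵥ x = 1)
    (heq : x ⬝ᵥ (B *ᵥ x) = sSup (spectrum ℝ B)) :
    B *ᵥ x = sSup (spectrum ℝ B) • x := by
  obtain ⟨y, h1, h2, h3, h4⟩ := SGaux.rayleigh_decomp hB x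
  set μ := sSup (spectrum ℝ B) with hμ
  have hzero : ∀ k, hB.eigenvalues k * y k = μ * y k := by
    have hsum : ∑ k, (μ - hB.eigenvalues k) * y k ^ 2 = 0 := by
      have : ∑ k, (μ - hB.eigenvalues k) * y k ^ 2
          = μ * ∑ k, y k ^ 2 - ∑ k, hB.eigenvalues k * y k ^ 2 := by
        rw [Finset.mul_sum, ← Finset.sum_sub_distrib]
        exact Finset.sum_congr rfl fun k _ => by ring
      rw [this, ← h1, hx1, mul_one, ← h2, heq]
      ring
    have hnn : ∀ k ∈ Finset.univ, 0 ≤ (μ - hB.eigenvalues k) * y k ^ 2 := fun k _ =>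
      mul_nonneg (sub_nonneg.2 (SGaux.eig_le_sSup hB k)) (sq_nonneg _)
    have hall := (Finset.sum_eq_zero_iff_of_nonneg hnn).1 hsum
    intro k
    have hk := hall k (Finset.mem_univ k)
    rcases mul_eq_zero.1 hk with h | h
    · have : hB.eigenvalues k = μ := by linarith
      rw [this]
    · rw [sq_eq_zero_iff.1 h, mul_zero, mul_zero]
  rw [h3]
  have : (fun k => hB.eigenvalues k * y k) = μ • y := by
    ext k
    simp [hzero k]
  rw [this, Matrix.mulVec_smul, h4]

lemma SGaux.dot_mulVec_diff (M M' : Matrix (Fin N) (Fin N) ℝ) (x : Fin N → ℝ) :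
    x ⬝ᵥ (M *ᵥ x) = x ⬝ᵥ (M' *ᵥ x) + ∑ a, ∑ b, x a * ((M a b - M' a b) * x b) := by
  simp only [dotProduct, Matrix.mulVec, Finset.mul_sum, ← Finset.sum_add_distrib]
  refine Finset.sum_congr rfl fun a _ => ?_
  refine Finset.sum_congr rfl fun b _ => ?_
  ring

end SpectralAux

section GraphAux

open SimpleGraph

variable {V : Type*} {G : SimpleGraph V}

/-- A closed walk that is not nil contains its base point in the tail of its support. -/
lemma SGaux.mem_tail_support {u : V} (c : G.Walk u u) (hnil : c ≠ SimpleGraph.Walk.nil)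
    {w : V} (hw : w ∈ c.support) : w ∈ c.support.tail := by
  by_cases hwu : w = u
  · subst hwu
    cases c with
    | nil => exact absurd rfl hnil
    | cons h p =>
      rw [Walk.support_cons]
      exact p.end_mem_support
  · rw [Walk.support_eq_cons] at hw
    rcases List.mem_cons.1 hw with h | h
    · exact absurd h hwu
    · exact h

/-- No cycle passes through a vertex of degree one. -/
lemma SGaux.not_mem_support_of_unique_nbr {v m : V} [DecidableEq V]
    (hdeg : ∀ z, G.Adj v z → z = m) {u : V} (c : G.Walk u u) (hc : c.IsCycle) :
    v ∉ c.support := by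
  intro hv
  have hc' : (c.rotate v hv).IsCycle := hc.rotate hv
  set c' : G.Walk v v := c.rotate v hv with hc'def
  clear_value c'
  obtain ⟨b, hadj, p, rfl⟩ := SimpleGraph.Walk.not_nil_iff.mp hc'.not_nil
  have hb : m = b := (hdeg _ hadj).symm
  subst hb
  have hvm : v ≠ m := G.ne_of_adj hadj
  obtain ⟨z, hadj2, r, hrev⟩ := SimpleGraph.Walk.exists_eq_cons_of_ne hvm p.reverse
  have hz : m = z := (hdeg _ hadj2).symm
  subst hz
  have h1 : s(v, m) ∈ p.reverse.edges := by rw [hrev]; simp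
  have h2 : s(v, m) ∈ p.edges := by
    rwa [Walk.edges_reverse, List.mem_reverse] at h1
  have h3 := hc'.edges_nodup
  rw [Walk.edges_cons] at h3
  exact (List.nodup_cons.1 h3).1 h2

/-- Splitting a cycle at a vertex gives two paths. -/
lemma SGaux.cycle_split [DecidableEq V] {i j : V} (c : G.Walk i i) (hc : c.IsCycle)
    (hj : j ∈ c.support) (hij : j ≠ i) :
    (c.takeUntil j hj).IsPath ∧ (c.dropUntil j hj).IsPath := by
  set P1 := c.takeUntil j hj with hP1
  set P2 := c.dropUntil j hj with hP2
  have hspec : P1.append P2 = c := c.take_spec hj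
  have hsupp := congrArg SimpleGraph.Walk.support hspec
  rw [Walk.support_append] at hsupp
  have hs1 : P1.support = i :: P1.support.tail := P1.support_eq_cons
  have hcs : c.support = i :: c.support.tail := c.support_eq_cons
  have htn : c.support.tail.Nodup := hc.support_nodup
  have hkey : P1.support.tail ++ P2.support.tail = c.support.tail := by
    have : (i :: P1.support.tail) ++ P2.support.tail = i :: c.support.tail := by
      rw [← hs1, hsupp, ← hcs]
    rw [List.cons_append] at this
    exact (List.cons.inj this).2
  have hnd : P1.support.tail.Nodup ∧ P2.support.tail.Nodup ∧
      P1.support.tail.Disjoint P2.support.tail := by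
    rw [← List.nodup_append']
    rw [hkey]; exact htn
  have hiP2 : i ∈ P2.support.tail := by
    have hie : i ∈ P2.support := P2.end_mem_support
    rw [P2.support_eq_cons] at hie
    rcases List.mem_cons.1 hie with h | h
    · exact absurd h.symm hij
    · exact h
  have hjP1 : j ∈ P1.support.tail := by
    have hje : j ∈ P1.support := P1.end_mem_support
    rw [hs1] at hje
    rcases List.mem_cons.1 hje with h | h
    · exact absurd h hij
    · exact h
  constructor
  · rw [Walk.isPath_def, hs1, List.nodup_cons]
    exact ⟨fun hiP1 => (hnd.2.2 hiP1 hiP2), hnd.1⟩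
  · rw [Walk.isPath_def, P2.support_eq_cons, List.nodup_cons]
    exact ⟨fun hjP2 => (hnd.2.2 hjP1 hjP2), hnd.2.1⟩

end GraphAux

namespace SignedGraph

open SimpleGraph

variable {n : ℕ}

lemma signEdge_mk (Γ : SignedGraph n) (a b : Fin n) : Γ.signEdge s(a, b) = Γ.sign a b := rfl

lemma walkSign_cons (Γ : SignedGraph n) {a b c : Fin n} (h : Γ.G.Adj a b) (p : Γ.G.Walk b c) :
    Γ.walkSign (SimpleGraph.Walk.cons h p) = Γ.sign a b * Γ.walkSign p := by
  simp [walkSign, SimpleGraph.Walk.edges_cons, signEdge_mk]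

lemma walkSign_append (Γ : SignedGraph n) {a b c : Fin n} (p : Γ.G.Walk a b)
    (q : Γ.G.Walk b c) :
    Γ.walkSign (p.append q) = Γ.walkSign p * Γ.walkSign q := by
  simp [walkSign, SimpleGraph.Walk.edges_append]

lemma walkSign_rotate (Γ : SignedGraph n) {a b : Fin n} (c : Γ.G.Walk a a)
    (h : b ∈ c.support) :
    Γ.walkSign (c.rotate b h) = Γ.walkSign c :=
  List.Perm.prod_eq (List.Perm.map _ (c.rotate_edges b h).perm)

lemma walkSign_transfer (Γ Δ : SignedGraph n) {a b : Fin n} (p : Γ.G.Walk a b)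
    (hp : ∀ e ∈ p.edges, e ∈ Δ.G.edgeSet)
    (hsgn : ∀ e ∈ p.edges, Δ.signEdge e = Γ.signEdge e) :
    Δ.walkSign (p.transfer Δ.G hp) = Γ.walkSign p := by
  unfold walkSign
  rw [SimpleGraph.Walk.edges_transfer]
  exact congrArg List.prod (List.map_congr_left hsgn)

lemma adjMatrix_of_adj (Γ : SignedGraph n) {a b : Fin n} (h : Γ.G.Adj a b) :
    Γ.adjMatrix a b = (Γ.sign a b : ℝ) := by
  simp only [adjMatrix]
  exact if_pos h

lemma adjMatrix_of_not_adj (Γ : SignedGraph n) {a b : Fin n} (h : ¬Γ.G.Adj a b) :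
    Γ.adjMatrix a b = 0 := by
  simp only [adjMatrix]
  exact if_neg h

lemma adjMatrix_isHermitian (Γ : SignedGraph n) : Γ.adjMatrix.IsHermitian := by
  unfold Matrix.IsHermitian
  ext a b
  simp only [Matrix.conjTranspose_apply, starRingEnd_apply, star_trivial]
  by_cases h : Γ.G.Adj b a
  · rw [adjMatrix_of_adj _ h, adjMatrix_of_adj _ h.symm, Γ.sign_symm]
  · rw [adjMatrix_of_not_adj _ h, adjMatrix_of_not_adj _ (fun h' => h h'.symm)]

/-- Delete the edge `{v, w}` from a signed graph. -/
def delEdge (Γ : SignedGraph n) (v w : Fin n) : SignedGraph n where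
  G :=
    { Adj := fun a b => Γ.G.Adj a b ∧ ¬((a = v ∧ b = w) ∨ (a = w ∧ b = v))
      symm := ⟨fun a b h => ⟨h.1.symm, fun hh => h.2 (by tauto)⟩⟩
      loopless := ⟨fun a h => Γ.G.loopless.irrefl a h.1⟩ }
  sign := Γ.sign
  sign_symm := Γ.sign_symm
  sign_pm := fun a b h => Γ.sign_pm a b h.1

lemma delEdge_adjMatrix_eq (Γ : SignedGraph n) (v w : Fin n) {a b : Fin n}
    (h : ¬((a = v ∧ b = w) ∨ (a = w ∧ b = v))) :
    (Γ.delEdge v w).adjMatrix a b = Γ.adjMatrix a b := by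
  by_cases hadj : Γ.G.Adj a b
  · rw [adjMatrix_of_adj (Γ.delEdge v w) (show (Γ.delEdge v w).G.Adj a b from ⟨hadj, h⟩),
      adjMatrix_of_adj Γ hadj]
    rfl
  · rw [adjMatrix_of_not_adj (Γ.delEdge v w) (fun hh => hadj hh.1),
      adjMatrix_of_not_adj Γ hadj]

lemma delEdge_adjMatrix_vw (Γ : SignedGraph n) (v w : Fin n) :
    (Γ.delEdge v w).adjMatrix v w = 0 :=
  adjMatrix_of_not_adj _ (fun hh => hh.2 (Or.inl ⟨rfl, rfl⟩))

lemma delEdge_adjMatrix_wv (Γ : SignedGraph n) (v w : Fin n) :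
    (Γ.delEdge v w).adjMatrix w v = 0 :=
  adjMatrix_of_not_adj _ (fun hh => hh.2 (Or.inr ⟨rfl, rfl⟩))

/-- Delete all edges at `v` and attach `v` to `m` by a positive edge. -/
def isolate (Γ : SignedGraph n) (v m : Fin n) (hmv : m ≠ v) : SignedGraph n where
  G :=
    { Adj := fun a b => (Γ.G.Adj a b ∧ a ≠ v ∧ b ≠ v) ∨ (a = v ∧ b = m) ∨ (a = m ∧ b = v)
      symm := by
        constructor
        intro a b h
        rcases h with ⟨h1, h2, h3⟩ | ⟨h1, h2⟩ | ⟨h1, h2⟩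
        · exact Or.inl ⟨h1.symm, h3, h2⟩
        · exact Or.inr (Or.inr ⟨h2, h1⟩)
        · exact Or.inr (Or.inl ⟨h2, h1⟩)
      loopless := by
        constructor
        intro a h
        rcases h with ⟨h1, _, _⟩ | ⟨h1, h2⟩ | ⟨h1, h2⟩
        · exact Γ.G.loopless.irrefl a h1
        · exact hmv (h2.symm.trans h1)
        · exact hmv (h1.symm.trans h2) }
  sign := fun a b => if a = v ∨ b = v then 1 else Γ.sign a b
  sign_symm := by
    intro a b
    by_cases h : a = v ∨ b = v
    · rw [if_pos h, if_pos (by tauto)]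
    · rw [if_neg h, if_neg (by tauto), Γ.sign_symm]
  sign_pm := by
    intro a b hab
    by_cases h : a = v ∨ b = v
    · rw [if_pos h]; left; rfl
    · rw [if_neg h]
      refine Γ.sign_pm a b ?_
      rcases hab with ⟨h1, _, _⟩ | ⟨h1, h2⟩ | ⟨h1, h2⟩
      · exact h1
      · exact absurd (Or.inl h1) h
      · exact absurd (Or.inr h2) h

lemma isolate_adjMatrix_eq (Γ : SignedGraph n) (v m : Fin n) (hmv : m ≠ v) {a b : Fin n}
    (ha : a ≠ v) (hb : b ≠ v) :
    (Γ.isolate v m hmv).adjMatrix a b = Γ.adjMatrix a b := by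
  by_cases hadj : Γ.G.Adj a b
  · rw [adjMatrix_of_adj (Γ.isolate v m hmv) (Or.inl ⟨hadj, ha, hb⟩), adjMatrix_of_adj Γ hadj]
    show ((if a = v ∨ b = v then 1 else Γ.sign a b : ℤ) : ℝ) = _
    rw [if_neg (by tauto)]
  · rw [adjMatrix_of_not_adj Γ hadj, adjMatrix_of_not_adj (Γ.isolate v m hmv) ?_]
    rintro (⟨h1, _, _⟩ | ⟨h1, h2⟩ | ⟨h1, h2⟩)
    · exact hadj h1
    · exact ha h1
    · exact hb h2

lemma isolate_adjMatrix_row_v (Γ : SignedGraph n) (v m : Fin n) (hmv : m ≠ v) (b : Fin n) :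
    (Γ.isolate v m hmv).adjMatrix v b = if b = m then 1 else 0 := by
  by_cases hb : b = m
  · subst hb
    rw [if_pos rfl, adjMatrix_of_adj (Γ.isolate v b hmv) (Or.inr (Or.inl ⟨rfl, rfl⟩))]
    show ((if v = v ∨ b = v then 1 else Γ.sign v b : ℤ) : ℝ) = 1
    rw [if_pos (Or.inl rfl)]
    norm_num
  · rw [if_neg hb, adjMatrix_of_not_adj (Γ.isolate v m hmv) ?_]
    rintro (⟨_, h1, _⟩ | ⟨_, h2⟩ | ⟨h1, h2⟩)
    · exact h1 rfl
    · exact hb h2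
    · exact hmv h1.symm

end SignedGraph


open Matrix SimpleGraph SignedGraph

theorem shortest_neg_cycle_contains_all_neg_edges
    (n : ℕ) (hn : 6 ≤ n) (Γ' : SignedGraph n)
    (hub : Γ'.Unbalanced) (hfree : Γ'.NegC4Free)
    (hmax : ∀ Γ : SignedGraph n, Γ.Unbalanced → Γ.NegC4Free → Γ.lambda1 ≤ Γ'.lambda1)
    (x : Fin n → ℝ) (hx : Γ'.adjMatrix.mulVec x = Γ'.lambda1 • x)
    (hnn : ∀ i, 0 ≤ x i) (hunit : ∑ i, x i ^ 2 = 1)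
    (u : Fin n) (C : Γ'.G.Walk u u) (hC : Γ'.IsNegCycle C)
    (hshort : ∀ (v : Fin n) (C' : Γ'.G.Walk v v), Γ'.IsNegCycle C' →
      C.length ≤ C'.length) :
    ∀ i j, Γ'.G.Adj i j → Γ'.sign i j = -1 → s(i, j) ∈ C.edges := by
  classical
  intro i j hadj hsgn
  by_contra hnot
  have hij : i ≠ j := Γ'.G.ne_of_adj hadj
  have hx1 : x ⬝ᵥ x = 1 := by
    rw [dotProduct, ← hunit]
    exact Finset.sum_congr rfl fun k _ => (sq (x k)).symm
  have hray0 : x ⬝ᵥ (Γ'.adjMatrix *ᵥ x) = Γ'.lambda1 := by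
    rw [hx, dotProduct_smul, smul_eq_mul, hx1, mul_one]
  -- Case B as a general claim
  have key : ∀ v w : Fin n, Γ'.G.Adj v w → Γ'.sign v w = -1 → s(v, w) ∉ C.edges →
      v ∉ C.support → False := by
    intro v w hvw hsvw hnotvw hvC
    have hvwne : v ≠ w := Γ'.G.ne_of_adj hvw
    -- Step 1: delete the edge {v, w}
    set Γd : SignedGraph n := Γ'.delEdge v w with hΓd
    have hherm' := Γ'.adjMatrix_isHermitian
    have hhermd := Γd.adjMatrix_isHermitian
    -- Γd is unbalanced
    have hedC : ∀ e ∈ C.edges, e ∈ Γd.G.edgeSet := by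
      intro e he
      refine Sym2.ind (fun a b he => ?_) e he
      have hab : Γ'.G.Adj a b := (C.edges_subset_edgeSet he)
      refine ⟨hab, ?_⟩
      rintro (⟨rfl, rfl⟩ | ⟨rfl, rfl⟩)
      · exact hnotvw he
      · exact hnotvw (by rwa [Sym2.eq_swap] at he)
    have hubd : Γd.Unbalanced := by
      refine ⟨u, C.transfer Γd.G hedC, hC.1.transfer hedC, ?_⟩
      rw [walkSign_transfer Γ' Γd C hedC (fun e _ => rfl)]
      exact hC.2
    have hfreed : Γd.NegC4Free := by
      intro z c hc h4
      have hed : ∀ e ∈ c.edges, e ∈ Γ'.G.edgeSet := by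
        intro e he
        refine Sym2.ind (fun a b he => ?_) e he
        exact (c.edges_subset_edgeSet he).1
      have := hfree z (c.transfer Γ'.G hed) (hc.transfer hed)
        (by rw [SimpleGraph.Walk.length_transfer]; exact h4)
      rwa [walkSign_transfer Γd Γ' c hed (fun e _ => rfl)] at this
    have hmaxd : Γd.lambda1 ≤ Γ'.lambda1 := hmax Γd hubd hfreed
    -- Rayleigh quotient of x in Γd
    have hAvw : Γ'.adjMatrix v w = -1 := by
      rw [adjMatrix_of_adj Γ' hvw, hsvw]
      norm_num
    have hAwv : Γ'.adjMatrix w v = -1 := by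
      rw [adjMatrix_of_adj Γ' hvw.symm, ← Γ'.sign_symm, hsvw]
      norm_num
    have honepoint : ∀ (p q : Fin n) (cc : ℝ),
        (∑ a, ∑ b, (if a = p ∧ b = q then cc else 0)) = cc := by
      intro p q cc
      have h1 : ∀ a : Fin n, (∑ b, if a = p ∧ b = q then cc else 0)
          = if a = p then cc else 0 := by
        intro a
        by_cases ha : a = p
        · subst ha
          simp
        · simp [ha]
      simp only [h1]
      simp
    have hdiffd : x ⬝ᵥ (Γd.adjMatrix *ᵥ x) = Γ'.lambda1 + 2 * (x v * x w) := by
      rw [SGaux.dot_mulVec_diff Γd.adjMatrix Γ'.adjMatrix x, hray0]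
      congr 1
      have hpt : ∀ a b : Fin n, x a * ((Γd.adjMatrix a b - Γ'.adjMatrix a b) * x b)
          = (if a = v ∧ b = w then x v * x w else 0)
            + (if a = w ∧ b = v then x v * x w else 0) := by
        intro a b
        by_cases h1 : a = v ∧ b = w
        · obtain ⟨rfl, rfl⟩ := h1
          rw [if_pos ⟨rfl, rfl⟩, if_neg (fun hh => hvwne hh.1), delEdge_adjMatrix_vw, hAvw]
          ring
        · by_cases h2 : a = w ∧ b = v
          · obtain ⟨rfl, rfl⟩ := h2
            rw [if_neg h1, if_pos ⟨rfl, rfl⟩, delEdge_adjMatrix_wv, hAwv]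
            ring
          · rw [if_neg h1, if_neg h2, delEdge_adjMatrix_eq Γ' v w (by tauto)]
            ring
      calc (∑ a, ∑ b, x a * ((Γd.adjMatrix a b - Γ'.adjMatrix a b) * x b))
          = ∑ a, ∑ b, ((if a = v ∧ b = w then x v * x w else 0)
            + (if a = w ∧ b = v then x v * x w else 0)) :=
            Finset.sum_congr rfl fun a _ => Finset.sum_congr rfl fun b _ => hpt a b
      _ = (∑ a, ∑ b, (if a = v ∧ b = w then x v * x w else 0))
            + (∑ a, ∑ b, (if a = w ∧ b = v then x v * x w else 0)) := by
            rw [← Finset.sum_add_distrib]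
            exact Finset.sum_congr rfl fun a _ => by rw [← Finset.sum_add_distrib]
      _ = 2 * (x v * x w) := by
            rw [honepoint v w (x v * x w), honepoint w v (x v * x w)]
            ring
    have hled : x ⬝ᵥ (Γd.adjMatrix *ᵥ x) ≤ Γd.lambda1 :=
      SGaux.rayleigh_le_sSup hhermd x hx1
    have hxvw0 : x v * x w = 0 := by
      refine le_antisymm ?_ (mul_nonneg (hnn v) (hnn w))
      rw [hdiffd] at hled
      unfold SignedGraph.lambda1 at hmaxd hled
      linarith
    have hlamd : Γd.lambda1 = Γ'.lambda1 := by
      refine le_antisymm hmaxd ?_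
      rw [hdiffd, hxvw0, mul_zero, add_zero] at hled
      exact hled
    have hrayd : x ⬝ᵥ (Γd.adjMatrix *ᵥ x) = Γd.lambda1 := by
      rw [hdiffd, hxvw0, mul_zero, add_zero, hlamd]
    have heigd : Γd.adjMatrix *ᵥ x = Γd.lambda1 • x :=
      SGaux.mulVec_eq_of_rayleigh_eq hhermd x hx1 hrayd
    -- row w gives x v = 0
    have hxv : x v = 0 := by
      have h1 := congrFun heigd w
      have h2 := congrFun hx w
      rw [hlamd] at h1
      have h3 : (Γd.adjMatrix *ᵥ x) w = (Γ'.adjMatrix *ᵥ x) w := by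
        rw [h1, h2]
      simp only [Matrix.mulVec, dotProduct] at h3
      have h4 : ∀ b, Γd.adjMatrix w b * x b
          = Γ'.adjMatrix w b * x b + (if b = v then x v else 0) := by
        intro b
        by_cases hb : b = v
        · subst hb
          rw [if_pos rfl, delEdge_adjMatrix_wv, hAwv]
          ring
        · rw [if_neg hb, delEdge_adjMatrix_eq Γ' v w
            (by rintro (⟨h1, -⟩ | ⟨-, h2⟩); exacts [hvwne h1.symm, hb h2]), add_zero]
      rw [Finset.sum_congr rfl (fun b _ => h4 b), Finset.sum_add_distrib] at h3
      have h5 : (∑ b, if b = v then x v else 0) = x v := by simp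
      rw [h5] at h3
      linarith
    -- pick a vertex with positive coordinate
    have hex : ∃ m : Fin n, 0 < x m := by
      by_contra h
      push_neg at h
      have hz : ∀ k, x k = 0 := fun k => le_antisymm (h k) (hnn k)
      have : (1 : ℝ) = 0 := by
        rw [← hunit]
        exact Finset.sum_eq_zero fun k _ => by rw [hz k]; ring
      norm_num at this
    obtain ⟨m, hm⟩ := hex
    have hmv : m ≠ v := fun h => by rw [h, hxv] at hm; exact lt_irrefl 0 hm
    -- Step 2: isolate v and attach it to m
    set Γs : SignedGraph n := Γ'.isolate v m hmv with hΓs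
    have hherms := Γs.adjMatrix_isHermitian
    have hdeg : ∀ z, Γs.G.Adj v z → z = m := by
      rintro z (⟨_, h1, _⟩ | ⟨_, h2⟩ | ⟨h1, h2⟩)
      · exact absurd rfl h1
      · exact h2
      · exact absurd h1.symm hmv
    have hedCs : ∀ e ∈ C.edges, e ∈ Γs.G.edgeSet := by
      intro e he
      refine Sym2.ind (fun a b he => ?_) e he
      have hab : Γ'.G.Adj a b := C.edges_subset_edgeSet he
      have hav : a ≠ v := fun h => hvC (h ▸ C.fst_mem_support_of_mem_edges he)
      have hbv : b ≠ v := fun h => hvC (h ▸ C.snd_mem_support_of_mem_edges he)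
      exact Or.inl ⟨hab, hav, hbv⟩
    have hsgnC : ∀ e ∈ C.edges, Γs.signEdge e = Γ'.signEdge e := by
      intro e he
      refine Sym2.ind (fun a b he => ?_) e he
      have hav : a ≠ v := fun h => hvC (h ▸ C.fst_mem_support_of_mem_edges he)
      have hbv : b ≠ v := fun h => hvC (h ▸ C.snd_mem_support_of_mem_edges he)
      show (if a = v ∨ b = v then 1 else Γ'.sign a b) = Γ'.sign a b
      rw [if_neg (by tauto)]
    have hubs : Γs.Unbalanced := by
      refine ⟨u, C.transfer Γs.G hedCs, hC.1.transfer hedCs, ?_⟩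
      rw [walkSign_transfer Γ' Γs C hedCs hsgnC]
      exact hC.2
    have hfrees : Γs.NegC4Free := by
      intro z c hc h4
      by_cases hvc : v ∈ c.support
      · exact absurd hvc (SGaux.not_mem_support_of_unique_nbr hdeg c hc)
      · have hed : ∀ e ∈ c.edges, e ∈ Γ'.G.edgeSet := by
          intro e he
          refine Sym2.ind (fun a b he => ?_) e he
          have h := c.edges_subset_edgeSet he
          rcases h with ⟨h1, _, _⟩ | ⟨h1, _⟩ | ⟨_, h2⟩
          · exact h1
          · exact absurd (h1 ▸ c.fst_mem_support_of_mem_edges he) hvc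
          · exact absurd (h2 ▸ c.snd_mem_support_of_mem_edges he) hvc
        have hsg : ∀ e ∈ c.edges, Γ'.signEdge e = Γs.signEdge e := by
          intro e he
          refine Sym2.ind (fun a b he => ?_) e he
          have hav : a ≠ v := fun h => hvc (h ▸ c.fst_mem_support_of_mem_edges he)
          have hbv : b ≠ v := fun h => hvc (h ▸ c.snd_mem_support_of_mem_edges he)
          show Γ'.sign a b = (if a = v ∨ b = v then 1 else Γ'.sign a b)
          rw [if_neg (by tauto)]
        have := hfree z (c.transfer Γ'.G hed) (hc.transfer hed)
          (by rw [SimpleGraph.Walk.length_transfer]; exact h4)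
        rwa [walkSign_transfer Γs Γ' c hed hsg] at this
    have hmaxs : Γs.lambda1 ≤ Γ'.lambda1 := hmax Γs hubs hfrees
    have hdiffs : x ⬝ᵥ (Γs.adjMatrix *ᵥ x) = Γ'.lambda1 := by
      rw [SGaux.dot_mulVec_diff Γs.adjMatrix Γ'.adjMatrix x, hray0]
      have hz : ∀ a b : Fin n, x a * ((Γs.adjMatrix a b - Γ'.adjMatrix a b) * x b) = 0 := by
        intro a b
        by_cases ha : a = v
        · rw [ha, hxv]
          ring
        · by_cases hb : b = v
          · rw [hb, hxv]
            ring
          · rw [isolate_adjMatrix_eq Γ' v m hmv ha hb]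
            ring
      have h0 : (∑ a, ∑ b, x a * ((Γs.adjMatrix a b - Γ'.adjMatrix a b) * x b)) = 0 :=
        Finset.sum_eq_zero fun a _ => Finset.sum_eq_zero fun b _ => hz a b
      rw [h0, add_zero]
    have hles : x ⬝ᵥ (Γs.adjMatrix *ᵥ x) ≤ Γs.lambda1 :=
      SGaux.rayleigh_le_sSup hherms x hx1
    have hlams : Γs.lambda1 = Γ'.lambda1 := by
      refine le_antisymm hmaxs ?_
      rw [hdiffs] at hles
      exact hles
    have hrays : x ⬝ᵥ (Γs.adjMatrix *ᵥ x) = Γs.lambda1 := by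
      rw [hdiffs, hlams]
    have heigs : Γs.adjMatrix *ᵥ x = Γs.lambda1 • x :=
      SGaux.mulVec_eq_of_rayleigh_eq hherms x hx1 hrays
    have hrowv := congrFun heigs v
    have h6 : (Γs.adjMatrix *ᵥ x) v = x m := by
      have hpt6 : ∀ b, Γs.adjMatrix v b * x b = if b = m then x b else 0 := by
        intro b
        rw [isolate_adjMatrix_row_v Γ' v m hmv b]
        by_cases hb : b = m <;> simp [hb]
      simp only [Matrix.mulVec, dotProduct, hpt6]
      simp
    rw [h6] at hrowv
    rw [Pi.smul_apply, smul_eq_mul, hxv, mul_zero] at hrowv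
    exact absurd hrowv (ne_of_gt hm)

  by_cases hiC : i ∈ C.support
  · by_cases hjC : j ∈ C.support
    · -- Case A: chord of the shortest negative cycle
      set c' : Γ'.G.Walk i i := C.rotate i hiC with hc'def
      have hcyc' : c'.IsCycle := hC.1.rotate hiC
      have hCnil : C ≠ SimpleGraph.Walk.nil := hC.1.ne_nil
      have hjc' : j ∈ c'.support := by
        rw [c'.support_eq_cons]
        refine List.mem_cons.2 (Or.inr ?_)
        exact ((C.support_rotate i hiC).perm.mem_iff).2 (SGaux.mem_tail_support C hCnil hjC)
      have hji : j ≠ i := fun h => hij h.symm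
      obtain ⟨hp1, hp2⟩ := SGaux.cycle_split c' hcyc' hjc' hji
      set P1 := c'.takeUntil j hjc' with hP1def
      set P2 := c'.dropUntil j hjc' with hP2def
      have hec' : s(i, j) ∉ c'.edges := fun h =>
        hnot (((C.rotate_edges i hiC).perm.mem_iff).1 h)
      have heP1 : s(j, i) ∉ P1.edges := by
        intro h
        have h2 := c'.edges_takeUntil_subset hjc' h
        rw [Sym2.eq_swap] at h2
        exact hec' h2
      have heP2 : s(i, j) ∉ P2.edges := fun h => hec' (c'.edges_dropUntil_subset hjc' h)
      have hcyc1 : (SimpleGraph.Walk.cons hadj.symm P1).IsCycle :=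
        (SimpleGraph.Walk.cons_isCycle_iff P1 hadj.symm).2 ⟨hp1, heP1⟩
      have hcyc2 : (SimpleGraph.Walk.cons hadj P2).IsCycle :=
        (SimpleGraph.Walk.cons_isCycle_iff P2 hadj).2 ⟨hp2, heP2⟩
      have hclen : c'.length = C.length := by
        have h2 := (C.rotate_edges i hiC).perm.length_eq
        rwa [SimpleGraph.Walk.length_edges, SimpleGraph.Walk.length_edges] at h2
      have hlen : P1.length + P2.length = C.length := by
        have h1 := congrArg SimpleGraph.Walk.length (c'.take_spec hjc')
        rw [SimpleGraph.Walk.length_append] at h1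
        rw [← hclen]
        exact h1
      have hl1 : 2 ≤ P1.length := by
        obtain ⟨z, hz, q, hq⟩ := SimpleGraph.Walk.exists_eq_cons_of_ne hij P1
        by_contra hlt
        push_neg at hlt
        have hq1 : q.length = 0 := by
          have := congrArg SimpleGraph.Walk.length hq
          rw [SimpleGraph.Walk.length_cons] at this
          omega
        have hzj : z = j := SimpleGraph.Walk.eq_of_length_eq_zero hq1
        have h3 : s(i, z) ∈ P1.edges := by
          rw [hq]
          simp
        rw [hzj] at h3
        exact hec' (c'.edges_takeUntil_subset hjc' h3)
      have hl2 : 2 ≤ P2.length := by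
        obtain ⟨z, hz, q, hq⟩ := SimpleGraph.Walk.exists_eq_cons_of_ne hji P2
        by_contra hlt
        push_neg at hlt
        have hq1 : q.length = 0 := by
          have := congrArg SimpleGraph.Walk.length hq
          rw [SimpleGraph.Walk.length_cons] at this
          omega
        have hzi : z = i := SimpleGraph.Walk.eq_of_length_eq_zero hq1
        have h3 : s(j, z) ∈ P2.edges := by
          rw [hq]
          simp
        rw [hzi, Sym2.eq_swap] at h3
        exact hec' (c'.edges_dropUntil_subset hjc' h3)
      have hsprod : Γ'.walkSign P1 * Γ'.walkSign P2 = -1 := by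
        have h1 : Γ'.walkSign c' = -1 := by
          rw [hc'def, Γ'.walkSign_rotate C hiC]
          exact hC.2
        have h2 := Γ'.walkSign_append P1 P2
        rw [hP1def, hP2def, c'.take_spec hjc'] at h2
        rw [← h2]
        exact h1
      have hs1 : Γ'.walkSign (SimpleGraph.Walk.cons hadj.symm P1) = - Γ'.walkSign P1 := by
        rw [Γ'.walkSign_cons hadj.symm P1, ← Γ'.sign_symm, hsgn]
        ring
      have hs2 : Γ'.walkSign (SimpleGraph.Walk.cons hadj P2) = - Γ'.walkSign P2 := by
        rw [Γ'.walkSign_cons hadj P2, hsgn]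
        ring
      have hunit1 : Γ'.walkSign P1 = 1 ∨ Γ'.walkSign P1 = -1 := by
        refine Int.isUnit_iff.1 (IsUnit.of_mul_eq_one (- Γ'.walkSign P2) ?_)
        rw [← neg_mul_comm]
        rw [neg_mul]
        omega
      rcases hunit1 with h | h
      · -- then sign P2 = -1, C2' := cons hadj.symm P1 is negative? no: P1 = 1 so cons has -1
        have hneg1 : Γ'.walkSign (SimpleGraph.Walk.cons hadj.symm P1) = -1 := by
          rw [hs1, h]
        have := hshort j (SimpleGraph.Walk.cons hadj.symm P1) ⟨hcyc1, hneg1⟩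
        rw [SimpleGraph.Walk.length_cons] at this
        omega
      · -- sign P1 = -1 so sign P2 = 1, cons hadj P2 is negative
        have hP2s : Γ'.walkSign P2 = 1 := by
          rw [h] at hsprod
          omega
        have hneg2 : Γ'.walkSign (SimpleGraph.Walk.cons hadj P2) = -1 := by
          rw [hs2, hP2s]
        have := hshort i (SimpleGraph.Walk.cons hadj P2) ⟨hcyc2, hneg2⟩
        rw [SimpleGraph.Walk.length_cons] at this
        omega
    · refine (key j i hadj.symm ?_ ?_ hjC).elim
      · rw [← Γ'.sign_symm]
        exact hsgn
      · rwa [Sym2.eq_swap]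
  · exact (key i j hadj hsgn hnot hiC).elim
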